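/- arXiv:1711.09792 — 2 statements merged into one kernel-verified Lean document; each statement's English description precedes it below -/
import Mathlib

section
/- Let π : FreeMagma X → FreeMagma Unit be the magma morphism sending every variable of X to the single generator x. If two terms T, T' in FreeMagma X satisfy π(T) = π(T'), then T ≡LD T' holds if and only if T = T'. -/
/-- LD-equivalence: the smallest congruence on `FreeMagma X` containing all pairs
`(T₁ ◃ (T₂ ◃ T₃), (T₁ ◃ T₂) ◃ (T₁ ◃ T₃))`. -/
inductive LDEquiv {X : Type*} : FreeMagma X → FreeMagma X → Prop
  | ld (a b c : FreeMagma X) : LDEquiv (a * (b * c)) ((a * b) * (a * c))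
  | refl (a : FreeMagma X) : LDEquiv a a
  | symm {a b : FreeMagma X} : LDEquiv a b → LDEquiv b a
  | trans {a b c : FreeMagma X} : LDEquiv a b → LDEquiv b c → LDEquiv a c
  | mul_left {a b : FreeMagma X} (c : FreeMagma X) : LDEquiv a b → LDEquiv (c * a) (c * b)
  | mul_right {a b : FreeMagma X} (c : FreeMagma X) : LDEquiv a b → LDEquiv (a * c) (b * c)

namespace LDProof

variable {X : Type*}


variable {X : Type*}

/-- One-step LD expansion. -/
inductive Exp1 {X : Type*} : FreeMagma X → FreeMagma X → Prop
  | root (a b c : FreeMagma X) : Exp1 (a * (b * c)) ((a * b) * (a * c))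
  | left {a a' : FreeMagma X} (b : FreeMagma X) : Exp1 a a' → Exp1 (a * b) (a' * b)
  | right {b b' : FreeMagma X} (a : FreeMagma X) : Exp1 b b' → Exp1 (a * b) (a * b')

/-- Multi-step LD expansion. -/
def Exp {X : Type*} : FreeMagma X → FreeMagma X → Prop := Relation.ReflTransGen Exp1

theorem Exp.refl {a : FreeMagma X} : Exp a a := Relation.ReflTransGen.refl

theorem Exp.trans {a b c : FreeMagma X} (h1 : Exp a b) (h2 : Exp b c) : Exp a c :=
  Relation.ReflTransGen.trans h1 h2

theorem Exp.single {a b : FreeMagma X} (h : Exp1 a b) : Exp a b :=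
  Relation.ReflTransGen.single h

theorem Exp.mul_left {a a' : FreeMagma X} (b : FreeMagma X) (h : Exp a a') :
    Exp (a * b) (a' * b) := by
  induction h with
  | refl => exact Exp.refl
  | tail _ h2 ih => exact ih.trans (Exp.single (Exp1.left b h2))

theorem Exp.mul_right {b b' : FreeMagma X} (a : FreeMagma X) (h : Exp b b') :
    Exp (a * b) (a * b') := by
  induction h with
  | refl => exact Exp.refl
  | tail _ h2 ih => exact ih.trans (Exp.single (Exp1.right a h2))

theorem Exp.mul {a a' b b' : FreeMagma X} (ha : Exp a a') (hb : Exp b b') :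
    Exp (a * b) (a' * b') :=
  (Exp.mul_left b ha).trans (Exp.mul_right a' hb)

/-- `blast a b` : fully distribute `a` over `b`. -/
def blast {X : Type*} : FreeMagma X → FreeMagma X → FreeMagma X
  | a, FreeMagma.of x => a * FreeMagma.of x
  | a, FreeMagma.mul b c => blast a b * blast a c

@[simp] theorem blast_of (a : FreeMagma X) (x : X) : blast a (FreeMagma.of x) = a * FreeMagma.of x := rfl

@[simp] theorem blast_mul (a b c : FreeMagma X) : blast a (b * c) = blast a b * blast a c := rfl

theorem exp_blast (a b : FreeMagma X) : Exp (a * b) (blast a b) := by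
  induction b using FreeMagma.recOnMul generalizing a with
  | ih1 x => exact Exp.refl
  | ih2 b c ihb ihc =>
    exact (Exp.single (Exp1.root a b c)).trans ((ihb a).mul (ihc a))

theorem blast_mono_right {b b' : FreeMagma X} (a : FreeMagma X) (h : Exp1 b b') :
    Exp (blast a b) (blast a b') := by
  induction h generalizing a with
  | root x y z => exact Exp.single (Exp1.root (blast a x) (blast a y) (blast a z))
  | left c _ ih => exact Exp.mul_left _ (ih a)
  | right c _ ih => exact Exp.mul_right _ (ih a)

theorem blast_mono_left {a a' : FreeMagma X} (b : FreeMagma X) (h : Exp1 a a') :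
    Exp (blast a b) (blast a' b) := by
  induction b using FreeMagma.recOnMul with
  | ih1 x => exact Exp.mul_left _ (Exp.single h)
  | ih2 b c ihb ihc => exact ihb.mul ihc

theorem blast_mono {a a' b b' : FreeMagma X} (ha : Exp a a') (hb : Exp b b') :
    Exp (blast a b) (blast a' b') := by
  have h1 : Exp (blast a b) (blast a' b) := by
    induction ha with
    | refl => exact Exp.refl
    | tail _ h2 ih => exact ih.trans (blast_mono_left _ h2)
  refine h1.trans ?_
  induction hb with
  | refl => exact Exp.refl
  | tail _ h2 ih => exact ih.trans (blast_mono_right _ h2)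

/-- The `∂` operator. -/
def der {X : Type*} : FreeMagma X → FreeMagma X
  | FreeMagma.of x => FreeMagma.of x
  | FreeMagma.mul a b => blast (der a) (der b)

@[simp] theorem der_of (x : X) : der (FreeMagma.of x : FreeMagma X) = FreeMagma.of x := rfl
@[simp] theorem der_mul (a b : FreeMagma X) : der (a * b) = blast (der a) (der b) := rfl

theorem exp_der (T : FreeMagma X) : Exp T (der T) := by
  induction T using FreeMagma.recOnMul with
  | ih1 x => exact Exp.refl
  | ih2 a b iha ihb => exact (iha.mul ihb).trans (exp_blast _ _)

theorem blast_ld (x y z : FreeMagma X) :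
    Exp (blast x (blast y z)) (blast (blast x y) (blast x z)) := by
  induction z using FreeMagma.recOnMul with
  | ih1 w =>
    refine (Exp.single (Exp1.root (blast x y) x (FreeMagma.of w))).trans ?_
    exact Exp.mul_left _ (exp_blast _ _)
  | ih2 z1 z2 ih1 ih2 => exact ih1.mul ih2

theorem der_mono1 {T T' : FreeMagma X} (h : Exp1 T T') : Exp (der T) (der T') := by
  induction h with
  | root a b c => exact blast_ld _ _ _
  | left b _ ih => exact blast_mono ih Exp.refl
  | right a _ ih => exact blast_mono Exp.refl ih

theorem der_mono {T T' : FreeMagma X} (h : Exp T T') : Exp (der T) (der T') := by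
  induction h with
  | refl => exact Exp.refl
  | tail _ h2 ih => exact ih.trans (der_mono1 h2)

theorem absorb1 {T T' : FreeMagma X} (h : Exp1 T T') : Exp T' (der T) := by
  induction h with
  | root a b c =>
    have h1 : Exp ((a * b) * (a * c)) (blast (der a) (der b) * blast (der a) (der c)) :=
      Exp.mul (((exp_der a).mul (exp_der b)).trans (exp_blast _ _))
        (((exp_der a).mul (exp_der c)).trans (exp_blast _ _))
    have h2 : blast (der a) (der b) * blast (der a) (der c) = blast (der a) (der b * der c) := rfl
    rw [h2] at h1
    exact h1.trans (blast_mono Exp.refl (exp_blast _ _))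
  | left b haa' ih =>
    exact (Exp.mul ih (exp_der b)).trans (exp_blast _ _)
  | right a hbb' ih =>
    exact (Exp.mul (exp_der a) ih).trans (exp_blast _ _)

theorem absorb {T U : FreeMagma X} (h : Exp T U) : ∃ n, Exp U (der^[n] T) := by
  induction h with
  | refl => exact ⟨0, Exp.refl⟩
  | tail _ h2 ih =>
    obtain ⟨n, hn⟩ := ih
    refine ⟨n + 1, ?_⟩
    have := (absorb1 h2).trans (der_mono hn)
    rwa [← Function.iterate_succ_apply' der n] at this

theorem exp_der_iterate (T : FreeMagma X) (m n : ℕ) (h : m ≤ n) :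
    Exp (der^[m] T) (der^[n] T) := by
  induction n with
  | zero => have : m = 0 := Nat.le_zero.mp h; subst this; exact Exp.refl
  | succ n ih =>
    rcases Nat.lt_or_ge m (n+1) with h1 | h1
    · have := ih (by omega)
      refine this.trans ?_
      rw [Function.iterate_succ_apply']
      exact exp_der _
    · have : m = n + 1 := by omega
      subst this; exact Exp.refl




theorem Exp1.toLD {T T' : FreeMagma X} (h : Exp1 T T') : LDEquiv T T' := by
  induction h with
  | root a b c => exact LDEquiv.ld a b c
  | left b _ ih => exact LDEquiv.mul_right b ih
  | right a _ ih => exact LDEquiv.mul_left a ih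

theorem Exp.toLD {T T' : FreeMagma X} (h : Exp T T') : LDEquiv T T' := by
  induction h with
  | refl => exact LDEquiv.refl _
  | tail _ h2 ih => exact ih.trans h2.toLD

/-- Confluence: LD-equivalent terms have a common expansion. -/
theorem common_exp {T T' : FreeMagma X} (h : LDEquiv T T') : ∃ U, Exp T U ∧ Exp T' U := by
  induction h with
  | ld a b c => exact ⟨(a*b)*(a*c), Exp.single (Exp1.root a b c), Exp.refl⟩
  | refl a => exact ⟨a, Exp.refl, Exp.refl⟩
  | symm _ ih => obtain ⟨U, h1, h2⟩ := ih; exact ⟨U, h2, h1⟩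
  | trans hab hbc ih1 ih2 =>
    obtain ⟨U1, ha1, hb1⟩ := ih1
    obtain ⟨U2, hb2, hc2⟩ := ih2
    rename_i a b c
    obtain ⟨n1, k1⟩ := absorb hb1
    obtain ⟨n2, k2⟩ := absorb hb2
    refine ⟨der^[max n1 n2] b, ?_, ?_⟩
    · exact ha1.trans (k1.trans (exp_der_iterate b n1 _ (le_max_left _ _)))
    · exact hc2.trans (k2.trans (exp_der_iterate b n2 _ (le_max_right _ _)))
  | mul_left c _ ih =>
    obtain ⟨U, h1, h2⟩ := ih
    exact ⟨c * U, Exp.mul Exp.refl h1, Exp.mul Exp.refl h2⟩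
  | mul_right c _ ih =>
    obtain ⟨U, h1, h2⟩ := ih
    exact ⟨U * c, Exp.mul h1 Exp.refl, Exp.mul h2 Exp.refl⟩

/-- Left spine of a term. -/
def spine {X : Type*} : FreeMagma X → List (FreeMagma X)
  | FreeMagma.of x => [FreeMagma.of x]
  | FreeMagma.mul a b => (a * b) :: spine a

@[simp] theorem spine_of (x : X) : spine (FreeMagma.of x : FreeMagma X) = [FreeMagma.of x] := rfl
@[simp] theorem spine_mul (a b : FreeMagma X) : spine (a * b) = (a * b) :: spine a := rfl

theorem self_mem_spine (T : FreeMagma X) : T ∈ spine T := by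
  induction T using FreeMagma.recOnMul with
  | ih1 x => simp
  | ih2 a b iha ihb => simp

/-- Persistence of spine classes under one expansion step. -/
theorem spine_persist1 {V V' : FreeMagma X} (h : Exp1 V V') :
    ∀ S ∈ spine V, ∃ S' ∈ spine V', LDEquiv S S' := by
  induction h with
  | root a b c =>
    intro S hS
    rcases List.mem_cons.mp hS with h1 | h2
    · exact ⟨(a*b)*(a*c), by simp, h1 ▸ LDEquiv.ld a b c⟩
    · exact ⟨S, by simp [List.mem_cons]; right; right; exact h2, LDEquiv.refl S⟩
  | @left a a' b hexp ih =>
    intro S hS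
    rcases List.mem_cons.mp hS with h1 | h2
    · exact ⟨a' * b, by simp, h1 ▸ LDEquiv.mul_right b hexp.toLD⟩
    · obtain ⟨S', hS', hEq⟩ := ih S h2
      exact ⟨S', by simp [hS'], hEq⟩
  | @right b b' a hexp ih =>
    intro S hS
    rcases List.mem_cons.mp hS with h1 | h2
    · exact ⟨a * b', by simp, h1 ▸ LDEquiv.mul_left a hexp.toLD⟩
    · exact ⟨S, by simp [h2], LDEquiv.refl S⟩

theorem spine_persist {V V' : FreeMagma X} (h : Exp V V') :
    ∀ S ∈ spine V, ∃ S' ∈ spine V', LDEquiv S S' := by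
  induction h with
  | refl => exact fun S hS => ⟨S, hS, LDEquiv.refl S⟩
  | tail _ h2 ih =>
    intro S hS
    obtain ⟨S1, hS1, hEq1⟩ := ih S hS
    obtain ⟨S2, hS2, hEq2⟩ := spine_persist1 h2 S1 hS1
    exact ⟨S2, hS2, hEq1.trans hEq2⟩

/-- Strict iterated left divisibility. -/
def Lt {X : Type*} : FreeMagma X → FreeMagma X → Prop :=
  Relation.TransGen (fun u v => ∃ w, LDEquiv v (u * w))

theorem Lt.congr_left {P S Y : FreeMagma X} (h : LDEquiv P S) (hlt : Lt S Y) : Lt P Y := by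
  induction hlt with
  | single hstep => obtain ⟨w, hw⟩ := hstep; exact Relation.TransGen.single ⟨w, hw.trans (LDEquiv.mul_right w h.symm)⟩
  | tail _ hstep ih => exact Relation.TransGen.tail ih hstep

theorem mem_spine_lt {S A : FreeMagma X} (b : FreeMagma X) (h : S ∈ spine A) : Lt S (A * b) := by
  have key : ∀ (A : FreeMagma X) (S : FreeMagma X), S ∈ spine A → S = A ∨ Lt S A := by
    intro A
    induction A using FreeMagma.recOnMul with
    | ih1 x => intro S hS; simp at hS; exact Or.inl hS
    | ih2 a c iha ihc =>
      intro S hS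
      rcases List.mem_cons.mp hS with h1 | h2
      · exact Or.inl h1
      · rcases iha S h2 with h3 | h3
        · exact Or.inr (h3 ▸ Relation.TransGen.single ⟨c, LDEquiv.refl _⟩)
        · exact Or.inr (Relation.TransGen.tail h3 ⟨c, LDEquiv.refl _⟩)
  rcases key A S h with h1 | h1
  · exact h1 ▸ Relation.TransGen.single ⟨b, LDEquiv.refl _⟩
  · exact Relation.TransGen.tail h1 ⟨b, LDEquiv.refl _⟩

/-- Spine trichotomy. -/
theorem spine_tricho {U S S' : FreeMagma X} (hS : S ∈ spine U) (hS' : S' ∈ spine U) :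
    S = S' ∨ Lt S S' ∨ Lt S' S := by
  induction U using FreeMagma.recOnMul with
  | ih1 x => simp at hS hS'; left; rw [hS, hS']
  | ih2 a b iha ihb =>
    rcases List.mem_cons.mp hS with h1 | h2
    · rcases List.mem_cons.mp hS' with k1 | k2
      · left; rw [h1, k1]
      · right; right; rw [h1]; exact mem_spine_lt b k2
    · rcases List.mem_cons.mp hS' with k1 | k2
      · right; left; rw [k1]; exact mem_spine_lt b h2
      · exact iha h2 k2

/-- Comparison : left factors of LD-equivalent products are comparable. -/
theorem comparison {P Q P' Q' : FreeMagma X} (h : LDEquiv (P * Q) (P' * Q')) :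
    LDEquiv P P' ∨ (∃ M, Lt P M ∧ LDEquiv M P') ∨ (∃ M, Lt P' M ∧ LDEquiv M P) := by
  obtain ⟨U, h1, h2⟩ := common_exp h
  obtain ⟨S, hS, hPS⟩ := spine_persist h1 P (by simp [self_mem_spine])
  obtain ⟨S', hS', hPS'⟩ := spine_persist h2 P' (by simp [self_mem_spine])
  rcases spine_tricho hS hS' with h3 | h3 | h3
  · exact Or.inl (hPS.trans (h3 ▸ hPS'.symm))
  · exact Or.inr (Or.inl ⟨S', Lt.congr_left hPS h3, hPS'.symm⟩)
  · exact Or.inr (Or.inr ⟨S, Lt.congr_left hPS' h3, hPS.symm⟩)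




open FreeGroup

abbrev FG := FreeGroup ℕ
abbrev Letter := ℕ × Bool

/-- Reducedness predicate on words. -/
def Reduced (w : List Letter) : Prop :=
  List.Chain' (fun p q => ¬(p.1 = q.1 ∧ p.2 = !q.2)) w

theorem reduce_eq_self {w : List Letter} (h : Reduced w) : FreeGroup.reduce w = w := by
  induction w with
  | nil => rfl
  | cons x L ih =>
    have hred : FreeGroup.reduce L = L := ih h.tail
    rw [FreeGroup.reduce.cons, hred]
    cases L with
    | nil => rfl
    | cons hd tl =>
      have hx : ¬(x.1 = hd.1 ∧ x.2 = !hd.2) := (List.isChain_cons_cons.mp h).1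
      simp only [hx, if_false]

theorem toWord_mk_reduced {w : List Letter} (h : Reduced w) : (FreeGroup.mk w).toWord = w := by
  rw [FreeGroup.toWord_mk, reduce_eq_self h]

theorem reduced_reduce (w : List Letter) : Reduced (FreeGroup.reduce w) := by
  induction w with
  | nil => exact List.isChain_nil
  | cons x L ih =>
    rw [FreeGroup.reduce.cons]
    rcases hL : FreeGroup.reduce L with _ | ⟨hd, tl⟩
    · exact List.isChain_singleton x
    · rw [hL] at ih
      by_cases hc : x.1 = hd.1 ∧ x.2 = !hd.2
      · simp only [hc, if_true]; exact ih.tail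
      · simp only [hc, if_false]
        exact List.isChain_cons_cons.mpr ⟨hc, ih⟩

theorem reduced_toWord (g : FG) : Reduced g.toWord := by
  have := FreeGroup.reduce_toWord g
  rw [← this]; exact reduced_reduce _

/-- Word of an image under a relabeling map. -/
theorem toWord_map {f : ℕ → ℕ} (hf : Function.Injective f) (g : FG) :
    (FreeGroup.map f g).toWord = g.toWord.map (fun p => (f p.1, p.2)) := by
  conv_lhs => rw [← FreeGroup.mk_toWord (x := g)]
  rw [FreeGroup.map.mk]
  apply toWord_mk_reduced
  have := reduced_toWord g
  unfold Reduced at this ⊢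
  refine List.isChain_map_of_isChain _ ?_ this
  rintro ⟨a, b⟩ ⟨c, d⟩ h ⟨h1, h2⟩
  exact h ⟨hf h1, h2⟩

/-- The shift endomorphism. -/
def shmap : FG →* FG := FreeGroup.map Nat.succ

theorem toWord_shmap (g : FG) : (shmap g).toWord = g.toWord.map (fun p => (p.1 + 1, p.2)) :=
  toWord_map Nat.succ_injective g

theorem shmap_injective : Function.Injective (shmap) := by
  intro a b h
  have : ∀ x : FG, FreeGroup.map Nat.pred (shmap x) = x := by
    intro x
    show FreeGroup.map Nat.pred (FreeGroup.map Nat.succ x) = x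
    rw [FreeGroup.map.comp]
    have : Nat.pred ∘ Nat.succ = fun z => z := funext fun n => rfl
    rw [this]
    exact FreeGroup.map.id' x
  rw [← this a, ← this b, h]

theorem shmap_ne_one {g : FG} (h : g ≠ 1) : shmap g ≠ 1 := by
  intro hc
  refine h (shmap_injective ?_)
  rw [hc]
  exact (shmap.map_one).symm

/-- The subgroup H = range of shmap. -/
def Hsub : Subgroup FG := MonoidHom.range shmap

theorem mem_Hsub_iff {h : FG} : h ∈ Hsub ↔ ∃ y, shmap y = h := Iff.rfl

/-- letters of an Hsub element are positive indices -/
theorem Hsub_word_pos {h : FG} (hh : h ∈ Hsub) : ∀ p ∈ h.toWord, 1 ≤ p.1 := by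
  obtain ⟨y, rfl⟩ := hh
  rw [toWord_shmap]
  intro p hp
  simp only [List.mem_map] at hp
  obtain ⟨q, _, rfl⟩ := hp
  omega

/-! ## Syllable datum machinery -/

/-- A syllable: either a power of `a₀` or a chunk from `Hsub`. -/
abbrev Syl := ℤ ⊕ FG

def sylval : Syl → FG
  | Sum.inl n => (FreeGroup.of 0) ^ n
  | Sum.inr h => h

def dEval (D : List Syl) : FG := (D.map sylval).prod

@[simp] theorem dEval_nil : dEval [] = 1 := rfl
@[simp] theorem dEval_cons (s : Syl) (D : List Syl) : dEval (s :: D) = sylval s * dEval D := by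
  simp [dEval]

theorem dEval_append (D1 D2 : List Syl) : dEval (D1 ++ D2) = dEval D1 * dEval D2 := by
  simp [dEval]

/-- alternation relation -/
def sylAlt : Syl → Syl → Prop
  | Sum.inl _, Sum.inr _ => True
  | Sum.inr _, Sum.inl _ => True
  | _, _ => False

def sylOk : Syl → Prop
  | Sum.inl n => n ≠ 0
  | Sum.inr h => h ∈ Hsub ∧ h ≠ 1

/-- Well-formed datum. -/
def WF (D : List Syl) : Prop := List.Chain' sylAlt D ∧ ∀ s ∈ D, sylOk s

theorem WF_nil : WF [] := ⟨List.isChain_nil, by simp⟩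

theorem WF.tail {s : Syl} {D : List Syl} (h : WF (s :: D)) : WF D :=
  ⟨h.1.tail, fun t ht => h.2 t (List.mem_cons_of_mem s ht)⟩

/-- smart cons with merging -/
def consD : Syl → List Syl → List Syl
  | Sum.inl n, [] => if n = 0 then [] else [Sum.inl n]
  | Sum.inl n, Sum.inl m :: t => if n + m = 0 then t else Sum.inl (n + m) :: t
  | Sum.inl n, Sum.inr h :: t => if n = 0 then Sum.inr h :: t else Sum.inl n :: Sum.inr h :: t
  | Sum.inr h, [] => if h = 1 then [] else [Sum.inr h]
  | Sum.inr h, Sum.inr h' :: t => if h * h' = 1 then t else Sum.inr (h * h') :: t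
  | Sum.inr h, Sum.inl m :: t => if h = 1 then Sum.inl m :: t else Sum.inr h :: Sum.inl m :: t

theorem consD_eval (s : Syl) (D : List Syl) : dEval (consD s D) = sylval s * dEval D := by
  match s, D with
  | Sum.inl n, [] => by_cases h : n = 0 <;> simp [consD, h, sylval]
  | Sum.inl n, Sum.inl m :: t =>
    by_cases h : n + m = 0
    · have : m = -n := by omega
      simp [consD, h, sylval, this]
    · simp only [consD, h, if_false, dEval_cons, sylval]
      rw [zpow_add, mul_assoc]
  | Sum.inl n, Sum.inr h :: t => by_cases hn : n = 0 <;> simp [consD, hn, sylval]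
  | Sum.inr h, [] => by_cases hh : h = 1 <;> simp [consD, hh, sylval]
  | Sum.inr h, Sum.inr h' :: t =>
    by_cases hh : h * h' = 1 <;> simp [consD, hh, sylval, mul_assoc]
    rw [← mul_assoc, hh, one_mul]
  | Sum.inr h, Sum.inl m :: t => by_cases hh : h = 1 <;> simp [consD, hh, sylval]

theorem consD_WF {s : Syl} {D : List Syl} (hD : WF D)
    (hs : match s with | Sum.inl _ => True | Sum.inr h => h ∈ Hsub) :
    WF (consD s D) := by
  match s, D with
  | Sum.inl n, [] =>
    by_cases h : n = 0 <;> simp [consD, h]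
    · exact WF_nil
    · exact ⟨List.isChain_singleton _, by simp [sylOk, h]⟩
  | Sum.inl n, Sum.inl m :: t =>
    by_cases h : n + m = 0 <;> simp only [consD, h, if_true, if_false]
    · exact hD.tail
    · refine ⟨?_, ?_⟩
      · cases t with
        | nil => exact List.isChain_singleton _
        | cons u t' =>
          refine List.isChain_cons_cons.mpr ⟨?_, hD.1.tail⟩
          have := (List.isChain_cons_cons.mp hD.1).1
          cases u <;> simp [sylAlt] at this ⊢
      · intro x hx
        rcases List.mem_cons.mp hx with h1 | h2
        · subst h1; simp [sylOk, h]
        · exact hD.2 x (List.mem_cons_of_mem _ h2)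
  | Sum.inl n, Sum.inr h :: t =>
    by_cases hn : n = 0 <;> simp only [consD, hn, if_true, if_false]
    · exact hD
    · refine ⟨List.isChain_cons_cons.mpr ⟨trivial, hD.1⟩, ?_⟩
      intro x hx
      rcases List.mem_cons.mp hx with h1 | h2
      · subst h1; simp [sylOk, hn]
      · exact hD.2 x h2
  | Sum.inr h, [] =>
    by_cases hh : h = 1 <;> simp [consD, hh]
    · exact WF_nil
    · exact ⟨List.isChain_singleton _, by simp [sylOk, hh]; exact hs⟩
  | Sum.inr h, Sum.inr h' :: t =>
    by_cases hh : h * h' = 1 <;> simp only [consD, hh, if_true, if_false]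
    · exact hD.tail
    · refine ⟨?_, ?_⟩
      · cases t with
        | nil => exact List.isChain_singleton _
        | cons u t' =>
          refine List.isChain_cons_cons.mpr ⟨?_, hD.1.tail⟩
          have := (List.isChain_cons_cons.mp hD.1).1
          cases u <;> simp [sylAlt] at this ⊢
      · intro x hx
        rcases List.mem_cons.mp hx with h1 | h2
        · subst h1
          refine ⟨Subgroup.mul_mem _ hs ?_, hh⟩
          exact (hD.2 _ (List.mem_cons_self)).1
        · exact hD.2 x (List.mem_cons_of_mem _ h2)
  | Sum.inr h, Sum.inl m :: t =>
    by_cases hh : h = 1 <;> simp only [consD, hh, if_true, if_false]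
    · exact hD
    · refine ⟨List.isChain_cons_cons.mpr ⟨trivial, hD.1⟩, ?_⟩
      intro x hx
      rcases List.mem_cons.mp hx with h1 | h2
      · subst h1; exact ⟨hs, hh⟩
      · exact hD.2 x h2

/-- merge two data -/
def mergeD (D1 D2 : List Syl) : List Syl := D1.foldr consD D2

theorem mergeD_eval (D1 D2 : List Syl) : dEval (mergeD D1 D2) = dEval D1 * dEval D2 := by
  induction D1 with
  | nil => simp [mergeD]
  | cons s t ih =>
    simp only [mergeD, List.foldr_cons] at ih ⊢
    rw [consD_eval, ih, dEval_cons, mul_assoc]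

theorem mergeD_WF {D1 D2 : List Syl} (h1 : ∀ s ∈ D1, match s with | Sum.inl _ => True | Sum.inr h => h ∈ Hsub)
    (h2 : WF D2) : WF (mergeD D1 D2) := by
  induction D1 with
  | nil => exact h2
  | cons s t ih =>
    refine consD_WF (ih ?_) (h1 s (List.mem_cons_self))
    intro x hx; exact h1 x (List.mem_cons_of_mem _ hx)

/-- every element has a WF datum -/
theorem exists_datum (g : FG) : ∃ D, WF D ∧ dEval D = g := by
  induction g using FreeGroup.induction_on with
  | C1 => exact ⟨[], WF_nil, rfl⟩
  | of x =>
    cases x with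
    | zero => exact ⟨[Sum.inl 1], ⟨List.isChain_singleton _, by simp [sylOk]⟩, by simp [dEval, sylval]⟩
    | succ k =>
      refine ⟨[Sum.inr (FreeGroup.of (k+1))], ⟨List.isChain_singleton _, ?_⟩, by simp [dEval, sylval]⟩
      intro s hs; simp at hs; subst hs
      constructor
      · exact ⟨FreeGroup.of k, by simp [shmap, FreeGroup.map.of]⟩
      · exact FreeGroup.of_ne_one _
  | inv_of x _ =>
    cases x with
    | zero => exact ⟨[Sum.inl (-1)], ⟨List.isChain_singleton _, by simp [sylOk]⟩, by simp [dEval, sylval]⟩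
    | succ k =>
      refine ⟨[Sum.inr (FreeGroup.of (k+1))⁻¹], ⟨List.isChain_singleton _, ?_⟩, by simp [dEval, sylval]⟩
      intro s hs; simp at hs; subst hs
      constructor
      · exact Subgroup.inv_mem _ ⟨FreeGroup.of k, by simp [shmap, FreeGroup.map.of]⟩
      · simp
  | mul x y ihx ihy =>
    obtain ⟨D1, hW1, hE1⟩ := ihx
    obtain ⟨D2, hW2, hE2⟩ := ihy
    refine ⟨mergeD D1 D2, mergeD_WF ?_ hW2, by rw [mergeD_eval, hE1, hE2]⟩
    intro s hs
    have := hW1.2 s hs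
    cases s with
    | inl n => trivial
    | inr h => exact this.1




open FreeGroup

/-! ## Flatten and canonicity -/

def zword (n : ℤ) : List Letter := List.replicate n.natAbs (0, decide (0 < n))

theorem zword_reduced (n : ℤ) : Reduced (zword n) := by
  unfold Reduced zword
  apply List.isChain_replicate_of_rel
  simp

theorem toWord_zpow_of (a : ℕ) (n : ℤ) :
    ((FreeGroup.of a : FG) ^ n).toWord = List.replicate n.natAbs (a, decide (0 < n)) := by
  rcases n with k | k
  · rw [Int.ofNat_eq_coe, zpow_natCast, FreeGroup.toWord_of_pow]
    cases k with
    | zero => simp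
    | succ k =>
      simp only [Int.natAbs_natCast]
      congr 1
      simp
  · rw [Int.negSucc_eq, show -((k:ℤ) + 1) = -(((k+1:ℕ) : ℤ)) by push_cast; ring,
      zpow_neg, zpow_natCast, FreeGroup.toWord_inv, FreeGroup.toWord_of_pow]
    unfold FreeGroup.invRev
    simp
    omega

theorem mk_zword (n : ℤ) : FreeGroup.mk (zword n) = (FreeGroup.of 0) ^ n := by
  rw [zword, ← toWord_zpow_of 0 n, FreeGroup.mk_toWord]

theorem zpow_of_ne_one (a : ℕ) {n : ℤ} (hn : n ≠ 0) : (FreeGroup.of a : FG) ^ n ≠ 1 := by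
  intro hc
  have := congrArg FreeGroup.toWord hc
  rw [toWord_zpow_of, FreeGroup.toWord_one] at this
  simp at this
  omega

/-- flatten a datum to a word -/
def flatSyl : Syl → List Letter
  | Sum.inl n => zword n
  | Sum.inr h => h.toWord

def flat (D : List Syl) : List Letter := D.flatMap flatSyl

theorem flatSyl_ne_nil {s : Syl} (h : sylOk s) : flatSyl s ≠ [] := by
  cases s with
  | inl n =>
    simp [flatSyl, zword]
    simpa [sylOk] using h
  | inr h' =>
    simp only [flatSyl, ne_eq, FreeGroup.toWord_eq_nil_iff]
    exact h.2

theorem flatSyl_reduced {s : Syl} : Reduced (flatSyl s) := by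
  cases s with
  | inl n => exact zword_reduced n
  | inr h => exact reduced_toWord h

/-- index of letters in a flattened syllable -/
theorem flatSyl_idx {s : Syl} (h : sylOk s) :
    ∀ p ∈ flatSyl s, (match s with | Sum.inl _ => p.1 = 0 | Sum.inr _ => 1 ≤ p.1) := by
  cases s with
  | inl n =>
    intro p hp
    simp only [flatSyl, zword] at hp
    rw [List.eq_of_mem_replicate hp]
  | inr h' => exact fun p hp => Hsub_word_pos h.1 p hp

theorem flat_reduced {D : List Syl} (hD : WF D) : Reduced (flat D) := by
  induction D with
  | nil => exact List.isChain_nil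
  | cons s t ih =>
    have hs : sylOk s := hD.2 s (List.mem_cons_self)
    have hWt : WF t := hD.tail
    rw [flat, List.flatMap_cons]
    apply List.IsChain.append flatSyl_reduced (ih hWt)
    intro x hx y hy
    -- x is last of flatSyl s, y is head of flat t
    cases t with
    | nil => simp [flat] at hy
    | cons u t' =>
      have hu : sylOk u := hWt.2 u (List.mem_cons_self)
      have halt : sylAlt s u := (List.isChain_cons_cons.mp hD.1).1
      have hyu : y ∈ flatSyl u := by
        rw [flat, List.flatMap_cons, List.head?_append_of_ne_nil _ (flatSyl_ne_nil hu)] at hy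
        exact List.mem_of_mem_head? hy
      have hxs : x ∈ flatSyl s := List.mem_of_mem_getLast? hx
      have h1 := flatSyl_idx hs x hxs
      have h2 := flatSyl_idx hu y hyu
      cases s with
      | inl n =>
        cases u with
        | inl m => exact absurd halt (by simp [sylAlt])
        | inr h' => simp at h1 h2; omega
      | inr h' =>
        cases u with
        | inl m => simp at h1 h2; omega
        | inr h'' => exact absurd halt (by simp [sylAlt])

theorem dEval_eq_mk_flat (D : List Syl) : dEval D = FreeGroup.mk (flat D) := by
  induction D with
  | nil => simp [flat]; rfl
  | cons s t ih =>
    have hstep : flat (s :: t) = flatSyl s ++ flat t := by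
      simp [flat, List.flatMap_cons]
    rw [dEval_cons, ih, hstep, ← FreeGroup.mul_mk]
    congr 1
    cases s with
    | inl n => exact (mk_zword n).symm
    | inr h => exact (FreeGroup.mk_toWord).symm

/-- Canonicity -/
theorem toWord_dEval {D : List Syl} (hD : WF D) : (dEval D).toWord = flat D := by
  rw [dEval_eq_mk_flat, toWord_mk_reduced (flat_reduced hD)]




open FreeGroup

/-! ## The Q set and closures -/

def Qset (g : FG) : Prop :=
  g.toWord.head? = some ((0:ℕ), true) ∧ g.toWord.getLast? = some ((0:ℕ), false)

theorem zword_ne_nil {n : ℤ} (hn : n ≠ 0) : zword n ≠ [] := by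
  simp [zword]
  simpa using hn

theorem exists_concat_of_getLast? {α : Type*} : ∀ {l : List α} {a : α}, l.getLast? = some a → ∃ l', l = l' ++ [a]
  | [], a, h => by simp at h
  | [x], a, h => by
    simp at h
    exact ⟨[], by simp [h]⟩
  | x :: y :: t, a, h => by
    rw [List.getLast?_cons_cons] at h
    obtain ⟨l', hl'⟩ := exists_concat_of_getLast? h
    exact ⟨x :: l', by simp [hl']⟩

theorem flat_head {D : List Syl} (hD : WF D) {n : ℤ} (h : D.head? = some (Sum.inl n)) :
    (flat D).head? = some ((0:ℕ), decide (0 < n)) := by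
  cases D with
  | nil => simp at h
  | cons s t =>
    simp only [List.head?_cons, Option.some.injEq] at h
    subst h
    have hn : n ≠ 0 := by simpa [sylOk] using hD.2 _ (List.mem_cons_self)
    have : flat (Sum.inl n :: t) = zword n ++ flat t := by simp [flat, flatSyl]
    rw [this, List.head?_append_of_ne_nil _ (zword_ne_nil hn)]
    unfold zword
    rcases Nat.exists_eq_succ_of_ne_zero (Int.natAbs_ne_zero.mpr hn) with ⟨k, hk⟩
    rw [hk]
    simp [List.replicate_succ]

theorem flat_last {D : List Syl} (hD : WF D) {n : ℤ} (h : D.getLast? = some (Sum.inl n)) :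
    (flat D).getLast? = some ((0:ℕ), decide (0 < n)) := by
  induction D with
  | nil => simp at h
  | cons s t ih =>
    cases t with
    | nil =>
      simp only [List.getLast?_singleton, Option.some.injEq] at h
      subst h
      have hn : n ≠ 0 := by simpa [sylOk] using hD.2 _ (List.mem_cons_self)
      have : flat [Sum.inl n] = zword n := by simp [flat, flatSyl]
      rw [this]
      unfold zword
      rcases Nat.exists_eq_succ_of_ne_zero (Int.natAbs_ne_zero.mpr hn) with ⟨k, hk⟩
      rw [hk]
      simp [List.getLast?_replicate]
    | cons u t' =>
      have h2 : (u :: t').getLast? = some (Sum.inl n) := by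
        rwa [List.getLast?_cons_cons] at h
      have : flat (s :: u :: t') = flatSyl s ++ flat (u :: t') := by simp [flat]
      rw [this, List.getLast?_append_of_ne_nil]
      · exact ih hD.tail h2
      · have : flat (u :: t') = flatSyl u ++ flat t' := by simp [flat]
        rw [this]
        intro hc
        rcases List.append_eq_nil_iff.mp hc with ⟨h3, _⟩
        exact flatSyl_ne_nil (hD.tail.2 u (List.mem_cons_self)) h3

theorem datum_head_of_Q {D : List Syl} (hD : WF D)
    (h : (dEval D).toWord.head? = some ((0:ℕ), true)) :
    ∃ n : ℤ, 0 < n ∧ D.head? = some (Sum.inl n) := by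
  rw [toWord_dEval hD] at h
  cases D with
  | nil => simp [flat] at h
  | cons s t =>
    cases s with
    | inl n =>
      refine ⟨n, ?_, rfl⟩
      have := flat_head hD (n := n) rfl
      rw [this] at h
      simp at h
      exact h
    | inr hh =>
      exfalso
      have hok := hD.2 _ (List.mem_cons_self)
      have : flat (Sum.inr hh :: t) = flatSyl (Sum.inr hh) ++ flat t := by simp [flat]
      rw [this, List.head?_append_of_ne_nil _ (flatSyl_ne_nil hok)] at h
      have hmem := List.mem_of_mem_head? h
      have := flatSyl_idx hok _ hmem
      simp at this

theorem datum_last_of_Q {D : List Syl} (hD : WF D)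
    (h : (dEval D).toWord.getLast? = some ((0:ℕ), false)) :
    ∃ n : ℤ, n < 0 ∧ D.getLast? = some (Sum.inl n) := by
  rw [toWord_dEval hD] at h
  rcases hlast : D.getLast? with _ | s
  · rw [List.getLast?_eq_none_iff] at hlast
    subst hlast
    simp [flat] at h
  · have hmem : s ∈ D := List.mem_of_mem_getLast? (show s ∈ D.getLast? from by rw [hlast]; rfl)
    cases s with
    | inl n =>
      refine ⟨n, ?_, rfl⟩
      have h2 := flat_last hD hlast
      rw [h2] at h
      have hn : n ≠ 0 := by simpa [sylOk] using hD.2 _ hmem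
      simp at h
      omega
    | inr hh =>
      exfalso
      obtain ⟨D', rfl⟩ := exists_concat_of_getLast? hlast
      have hok : sylOk (Sum.inr hh) := hD.2 _ hmem
      have hflat : flat (D' ++ [Sum.inr hh]) = flat D' ++ flatSyl (Sum.inr hh) := by
        simp [flat]
      rw [hflat, List.getLast?_append_of_ne_nil _ (flatSyl_ne_nil hok)] at h
      have hmem2 := List.mem_of_mem_getLast?
        (show ((0:ℕ), false) ∈ (flatSyl (Sum.inr hh)).getLast? from by rw [h]; rfl)
      have := flatSyl_idx hok _ hmem2
      simp at this

/-- datum-based characterization gives closure under structure-preserving maps -/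
theorem Q_map (ψ : FG →* FG) (h0 : ψ (FreeGroup.of 0) = FreeGroup.of 0)
    (hH : ∀ h, h ∈ Hsub → h ≠ 1 → ψ h ∈ Hsub ∧ ψ h ≠ 1) {g : FG} (hg : Qset g) :
    Qset (ψ g) := by
  obtain ⟨D, hWF, hE⟩ := exists_datum g
  obtain ⟨n, hn, hhead⟩ := datum_head_of_Q hWF (by rw [hE]; exact hg.1)
  obtain ⟨m, hm, hlast⟩ := datum_last_of_Q hWF (by rw [hE]; exact hg.2)
  set F : Syl → Syl := fun s => match s with
    | Sum.inl n => Sum.inl n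
    | Sum.inr h => Sum.inr (ψ h) with hF
  have hWF' : WF (D.map F) := by
    constructor
    · apply List.isChain_map_of_isChain F _ hWF.1
      intro a b hab
      cases a <;> cases b <;> simp [sylAlt, hF] at hab ⊢
    · intro s hs
      rw [List.mem_map] at hs
      obtain ⟨t, ht, rfl⟩ := hs
      have := hWF.2 t ht
      cases t with
      | inl k => exact this
      | inr h => exact hH h this.1 this.2
  have hev : ∀ E : List Syl, dEval (E.map F) = ψ (dEval E) := by
    intro E
    induction E with
    | nil => simp
    | cons s t ih =>
      rw [List.map_cons, dEval_cons, dEval_cons, ψ.map_mul, ih]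
      congr 1
      cases s with
      | inl k =>
        show sylval (Sum.inl k) = ψ (sylval (Sum.inl k))
        show (FreeGroup.of 0) ^ k = ψ ((FreeGroup.of 0) ^ k)
        rw [map_zpow, h0]
      | inr h => rfl
  constructor
  · rw [← hE, ← hev D, toWord_dEval hWF']
    have : (D.map F).head? = some (Sum.inl n) := by
      rw [List.head?_map, hhead]; rfl
    rw [flat_head hWF' this]
    simp [hn]
  · rw [← hE, ← hev D, toWord_dEval hWF']
    have : (D.map F).getLast? = some (Sum.inl m) := by
      rw [List.getLast?_map, hlast]; rfl
    rw [flat_last hWF' this]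
    simp [show ¬ (0 < m) by omega]




open FreeGroup

/-! ## tau, psi, phi0 -/

def swapf : ℕ → ℕ := fun k => if k = 0 then 1 else if k = 1 then 0 else k

theorem swapf_invol : ∀ k, swapf (swapf k) = k := by
  intro k
  unfold swapf
  rcases k with _ | _ | k <;> simp

theorem swapf_injective : Function.Injective swapf := by
  intro a b h
  have := congrArg swapf h
  rwa [swapf_invol, swapf_invol] at this

/-- the 0↔1 relabeling -/
def tauh : FG →* FG := FreeGroup.map swapf

theorem toWord_tauh (g : FG) : (tauh g).toWord = g.toWord.map (fun p => (swapf p.1, p.2)) :=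
  toWord_map swapf_injective g

/-- psi : fixes a₀ and a₁, conjugates higher generators by a₁ -/
def psif : ℕ → FG := fun k =>
  if k = 0 then FreeGroup.of 0 else if k = 1 then FreeGroup.of 1
  else (FreeGroup.of 1)⁻¹ * FreeGroup.of k * FreeGroup.of 1

def psih : FG →* FG := FreeGroup.lift psif

/-- chi : fixes a₀, conjugates positive generators by a₀ -/
def chif : ℕ → FG := fun k =>
  if k = 0 then FreeGroup.of 0 else (FreeGroup.of 0)⁻¹ * FreeGroup.of k * FreeGroup.of 0

def chih : FG →* FG := FreeGroup.lift chif

theorem psih_shmap (x : FG) : psih (shmap x) = shmap (chih x) := by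
  have : (psih.comp shmap) = (shmap.comp chih) := by
    apply FreeGroup.ext_hom
    intro k
    simp only [MonoidHom.comp_apply]
    cases k with
    | zero =>
      show psih (FreeGroup.of 1) = shmap (chih (FreeGroup.of 0))
      simp [psih, chih, FreeGroup.lift_apply_of, psif, chif, shmap, FreeGroup.map.of]
    | succ k =>
      show psih (FreeGroup.of (k+2)) = shmap (chih (FreeGroup.of (k+1)))
      simp [psih, chih, FreeGroup.lift_apply_of, psif, chif, shmap, FreeGroup.map.of]
  exact DFunLike.congr_fun this x

theorem chih_injective : Function.Injective chih := by
  have : ∀ x, FreeGroup.lift (fun k => if k = 0 then FreeGroup.of 0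
      else FreeGroup.of 0 * FreeGroup.of k * (FreeGroup.of 0)⁻¹) (chih x) = x := by
    intro x
    rw [← MonoidHom.comp_apply]
    have : (FreeGroup.lift (fun k => if k = 0 then FreeGroup.of 0
        else FreeGroup.of 0 * FreeGroup.of k * (FreeGroup.of 0)⁻¹)).comp chih
        = MonoidHom.id FG := by
      apply FreeGroup.ext_hom
      intro k
      simp only [MonoidHom.comp_apply, MonoidHom.id_apply]
      cases k with
      | zero => simp [chih, FreeGroup.lift_apply_of, chif]
      | succ k =>
        simp [chih, FreeGroup.lift_apply_of, chif, mul_assoc]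
    rw [this]; rfl
  intro a b h
  rw [← this a, ← this b, h]

theorem psih_of0 : psih (FreeGroup.of 0) = FreeGroup.of 0 := by
  simp [psih, FreeGroup.lift_apply_of, psif]

theorem psih_Hsub : ∀ h, h ∈ Hsub → h ≠ 1 → psih h ∈ Hsub ∧ psih h ≠ 1 := by
  intro h hmem hne
  obtain ⟨x, rfl⟩ := hmem
  rw [psih_shmap]
  constructor
  · exact ⟨chih x, rfl⟩
  · apply shmap_ne_one
    intro hc
    apply hne
    have hx1 : x = 1 := by
      apply chih_injective
      rw [hc]
      exact chih.map_one.symm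
    rw [hx1]
    exact shmap.map_one

/-- the Artin automorphism φ₀ as an endomorphism -/
def phif : ℕ → FG := fun k =>
  if k = 0 then FreeGroup.of 0 * FreeGroup.of 1 * (FreeGroup.of 0)⁻¹
  else if k = 1 then FreeGroup.of 0 else FreeGroup.of k

def phi0h : FG →* FG := FreeGroup.lift phif

theorem phi0h_eq (g : FG) :
    phi0h g = FreeGroup.of 0 * tauh (psih g) * (FreeGroup.of 0)⁻¹ := by
  have : phi0h = ((MulAut.conj (FreeGroup.of (0:ℕ))).toMonoidHom.comp (tauh.comp psih)) := by
    apply FreeGroup.ext_hom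
    intro k
    simp only [MonoidHom.comp_apply, MulEquiv.coe_toMonoidHom, MulAut.conj_apply]
    rcases k with _ | _ | k
    · simp [phi0h, FreeGroup.lift_apply_of, phif, psih, psif, tauh, FreeGroup.map.of, swapf]
    · simp [phi0h, FreeGroup.lift_apply_of, phif, psih, psif, tauh, FreeGroup.map.of, swapf]
    · simp [phi0h, FreeGroup.lift_apply_of, phif, psih, psif, tauh, FreeGroup.map.of, swapf, mul_assoc]
  rw [this]; rfl

/-- conjugation by a₀ of an element with edges of positive index gives a Q element -/
theorem Q_conj {x : FG} (hne : x ≠ 1)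
    (hhead : ∀ p ∈ x.toWord.head?, 1 ≤ p.1) (hlast : ∀ p ∈ x.toWord.getLast?, 1 ≤ p.1) :
    Qset (FreeGroup.of 0 * x * (FreeGroup.of 0)⁻¹) := by
  have hw : x.toWord ≠ [] := by rwa [ne_eq, FreeGroup.toWord_eq_nil_iff]
  have hx : FreeGroup.of 0 * x * (FreeGroup.of 0)⁻¹ =
      FreeGroup.mk ((((0:ℕ), true) :: x.toWord) ++ [((0:ℕ), false)]) := by
    have h1 : (FreeGroup.of (0:ℕ) : FG) = FreeGroup.mk [((0:ℕ), true)] := rfl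
    have h2 : ((FreeGroup.of (0:ℕ) : FG))⁻¹ = FreeGroup.mk [((0:ℕ), false)] := by
      rw [h1, FreeGroup.inv_mk]
      rfl
    conv_lhs => rw [h2, h1, ← FreeGroup.mk_toWord (x := x)]
    rw [FreeGroup.mul_mk, FreeGroup.mul_mk]
    norm_num
  have hred : Reduced ((((0:ℕ), true) :: x.toWord) ++ [((0:ℕ), false)]) := by
    unfold Reduced
    refine List.isChain_append.mpr ?_
    refine ⟨?_, List.isChain_singleton _, ?_⟩
    · rw [List.isChain_cons]
      refine ⟨?_, reduced_toWord x⟩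
      intro y hy hc
      have := hhead y hy
      omega
    · intro y hy z hz
      simp at hz
      subst hz
      rcases List.getLast?_cons (l := x.toWord) (a := ((0:ℕ), true)) with h
      intro hc
      rw [h] at hy
      rcases Option.mem_def.mp hy with h2
      rcases hws : x.toWord.getLast? with _ | w
      · rw [hws] at h2; simp at h2
        rw [List.getLast?_eq_none_iff] at hws
        exact hw hws
      · rw [hws] at h2
        simp at h2
        subst h2
        have := hlast w (by rw [hws]; rfl)
        omega
  constructor
  · rw [hx, toWord_mk_reduced hred]
    rfl
  · rw [hx, toWord_mk_reduced hred]
    rw [List.getLast?_append_of_ne_nil _ (by simp)]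
    rfl

/-- Q is closed under φ₀ -/
theorem Q_phi0 {g : FG} (hg : Qset g) : Qset (phi0h g) := by
  rw [phi0h_eq]
  have hpsi : Qset (psih g) := Q_map psih psih_of0 psih_Hsub hg
  set x := tauh (psih g) with hx
  have hword : x.toWord = (psih g).toWord.map (fun p => (swapf p.1, p.2)) := toWord_tauh _
  apply Q_conj
  · intro hc
    have : (psih g).toWord = [] := by
      have := congrArg FreeGroup.toWord hc
      rw [hword, FreeGroup.toWord_one] at this
      exact List.map_eq_nil_iff.mp this
    rw [FreeGroup.toWord_eq_nil_iff] at this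
    rw [this] at hpsi
    simp [Qset, FreeGroup.toWord_one] at hpsi
  · intro p hp
    rw [hword, List.head?_map] at hp
    rcases hq : (psih g).toWord.head? with _ | q
    · rw [hq] at hp; simp at hp
    · rw [hq] at hp
      simp at hp
      have h3 := hpsi.1
      rw [hq] at h3
      simp at h3
      rw [← hp, h3]
      simp [swapf]
  · intro p hp
    rw [hword, List.getLast?_map] at hp
    rcases hq : (psih g).toWord.getLast? with _ | q
    · rw [hq] at hp; simp at hp
    · rw [hq] at hp
      simp at hp
      have h3 := hpsi.2
      rw [hq] at h3
      simp at h3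
      rw [← hp, h3]
      simp [swapf]

theorem Q_phi0_seed : Qset (phi0h (FreeGroup.of 0)) := by
  have : phi0h (FreeGroup.of 0) = FreeGroup.of 0 * FreeGroup.of 1 * (FreeGroup.of 0)⁻¹ := by
    simp [phi0h, FreeGroup.lift_apply_of, phif]
  rw [this]
  apply Q_conj (FreeGroup.of_ne_one 1)
  · intro p hp
    rw [FreeGroup.toWord_of] at hp
    have : p = ((1:ℕ), true) := by have := hp; simpa using this.symm
    simp [this]
  · intro p hp
    rw [FreeGroup.toWord_of] at hp
    have : p = ((1:ℕ), true) := by have := hp; simpa using this.symm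
    simp [this]

theorem of0_not_Q : ¬ Qset (FreeGroup.of (0:ℕ)) := by
  intro h
  have := h.2
  rw [FreeGroup.toWord_of] at this
  simp at this



end LDProof
section M4
namespace LDProof
open FreeGroup

/-! ## The shift on automorphisms and the Artin automorphism -/

/-- inverse of phi0 -/
def phiInvf : ℕ → FG := fun k =>
  if k = 0 then FreeGroup.of 1
  else if k = 1 then (FreeGroup.of 1)⁻¹ * FreeGroup.of 0 * FreeGroup.of 1 else FreeGroup.of k

def phi0invh : FG →* FG := FreeGroup.lift phiInvf

theorem phi0_left_inv : phi0invh.comp phi0h = MonoidHom.id FG := by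
  apply FreeGroup.ext_hom
  intro k
  simp only [MonoidHom.comp_apply, MonoidHom.id_apply]
  rcases k with _ | _ | k <;>
    simp [phi0h, phi0invh, FreeGroup.lift_apply_of, phif, phiInvf, mul_assoc]

theorem phi0_right_inv : phi0h.comp phi0invh = MonoidHom.id FG := by
  apply FreeGroup.ext_hom
  intro k
  simp only [MonoidHom.comp_apply, MonoidHom.id_apply]
  rcases k with _ | _ | k <;>
    simp [phi0h, phi0invh, FreeGroup.lift_apply_of, phif, phiInvf, mul_assoc]

/-- φ₀ as an automorphism -/
def phi0e : MulAut FG :=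
  { toFun := phi0h
    invFun := phi0invh
    left_inv := fun x => DFunLike.congr_fun phi0_left_inv x
    right_inv := fun x => DFunLike.congr_fun phi0_right_inv x
    map_mul' := phi0h.map_mul }

@[simp] theorem phi0e_apply (g : FG) : phi0e g = phi0h g := rfl

/-- the underlying hom of the shift of an automorphism -/
def ShF (β : MulAut FG) : FG →* FG :=
  FreeGroup.lift (fun k => match k with
    | 0 => FreeGroup.of 0
    | k+1 => shmap (β (FreeGroup.of k)))

@[simp] theorem ShF_of0 (β : MulAut FG) : ShF β (FreeGroup.of 0) = FreeGroup.of 0 :=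
  FreeGroup.lift_apply_of

@[simp] theorem ShF_succ (β : MulAut FG) (k : ℕ) :
    ShF β (FreeGroup.of (k+1)) = shmap (β (FreeGroup.of k)) :=
  FreeGroup.lift_apply_of

theorem ShF_shmap (β : MulAut FG) : (ShF β).comp shmap = shmap.comp (β : FG →* FG) := by
  apply FreeGroup.ext_hom
  intro k
  simp only [MonoidHom.comp_apply]
  show ShF β (shmap (FreeGroup.of k)) = shmap (β (FreeGroup.of k))
  have : shmap (FreeGroup.of k) = FreeGroup.of (k+1) := by
    simp [shmap, FreeGroup.map.of]
  rw [this, ShF_succ]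

theorem ShF_shmap_apply (β : MulAut FG) (x : FG) : ShF β (shmap x) = shmap (β x) :=
  DFunLike.congr_fun (ShF_shmap β) x

theorem ShF_comp (β γ : MulAut FG) : (ShF β).comp (ShF γ) = ShF (β * γ) := by
  apply FreeGroup.ext_hom
  intro k
  simp only [MonoidHom.comp_apply]
  cases k with
  | zero => simp
  | succ k =>
    rw [ShF_succ, ShF_shmap_apply, ShF_succ]
    rfl

theorem ShF_one : ShF 1 = MonoidHom.id FG := by
  apply FreeGroup.ext_hom
  intro k
  cases k with
  | zero => simp
  | succ k =>
    rw [ShF_succ]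
    show shmap ((1 : MulAut FG) (FreeGroup.of k)) = FreeGroup.of (k+1)
    simp [shmap, FreeGroup.map.of]

/-- shift as a map on automorphisms -/
def She (β : MulAut FG) : MulAut FG :=
  { toFun := ShF β
    invFun := ShF β⁻¹
    left_inv := fun x => by
      have h1 : (ShF β⁻¹).comp (ShF β) = ShF 1 := by rw [ShF_comp]; congr 1; group
      have := DFunLike.congr_fun h1 x
      simp only [MonoidHom.comp_apply] at this
      rw [this, ShF_one]; rfl
    right_inv := fun x => by
      have h1 : (ShF β).comp (ShF β⁻¹) = ShF 1 := by rw [ShF_comp]; congr 1; group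
      have := DFunLike.congr_fun h1 x
      simp only [MonoidHom.comp_apply] at this
      rw [this, ShF_one]; rfl
    map_mul' := (ShF β).map_mul }

@[simp] theorem She_apply (β : MulAut FG) (g : FG) : She β g = ShF β g := rfl

theorem She_mul (β γ : MulAut FG) : She (β * γ) = She β * She γ := by
  apply MulEquiv.ext
  intro x
  show ShF (β * γ) x = ShF β (ShF γ x)
  rw [← ShF_comp]
  rfl

theorem She_one : She 1 = 1 := by
  apply MulEquiv.ext
  intro x
  show ShF 1 x = x
  rw [ShF_one]; rfl

theorem She_inv (β : MulAut FG) : (She β)⁻¹ = She β⁻¹ := by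
  have h : She β * She β⁻¹ = 1 := by
    rw [← She_mul, mul_inv_cancel, She_one]
  exact inv_eq_of_mul_eq_one_right h

/-- Q is preserved by shifted automorphisms. -/
theorem Q_She (β : MulAut FG) {g : FG} (hg : Qset g) : Qset (She β g) := by
  apply Q_map (ShF β) (ShF_of0 β) _ hg
  intro h hmem hne
  obtain ⟨y, rfl⟩ := hmem
  rw [ShF_shmap_apply]
  refine ⟨⟨β y, rfl⟩, ?_⟩
  apply shmap_ne_one
  intro hc
  apply hne
  have : y = 1 := by
    have := congrArg (β⁻¹) hc
    simpa using this
  rw [this]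
  exact shmap.map_one

/-! ## The two key identities -/

theorem phi0_fix_sh2 (x : FG) : phi0h (shmap (shmap x)) = shmap (shmap x) := by
  have : phi0h.comp (shmap.comp shmap) = shmap.comp shmap := by
    apply FreeGroup.ext_hom
    intro k
    simp only [MonoidHom.comp_apply]
    have h1 : shmap (FreeGroup.of k) = FreeGroup.of (k+1) := by simp [shmap, FreeGroup.map.of]
    have h2 : shmap (FreeGroup.of (k+1)) = FreeGroup.of (k+2) := by simp [shmap, FreeGroup.map.of]
    rw [h1, h2]
    simp [phi0h, FreeGroup.lift_apply_of, phif]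
  exact DFunLike.congr_fun this x

theorem comm_I1 (γ : MulAut FG) : phi0e * She (She γ) = She (She γ) * phi0e := by
  apply MulEquiv.ext
  intro x
  show phi0h (ShF (She γ) x) = ShF (She γ) (phi0h x)
  have : phi0h.comp (ShF (She γ)) = (ShF (She γ)).comp phi0h := by
    apply FreeGroup.ext_hom
    intro k
    simp only [MonoidHom.comp_apply]
    rcases k with _ | _ | k
    · -- of 0
      rw [ShF_of0]
      have h0 : phi0h (FreeGroup.of 0) = FreeGroup.of 0 * FreeGroup.of 1 * (FreeGroup.of 0)⁻¹ := by
        simp [phi0h, FreeGroup.lift_apply_of, phif]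
      rw [h0]
      rw [_root_.map_mul, _root_.map_mul, _root_.map_inv, ShF_of0]
      have h1 : ShF (She γ) (FreeGroup.of 1) = FreeGroup.of 1 := by
        rw [ShF_succ]
        show shmap (ShF γ (FreeGroup.of 0)) = FreeGroup.of 1
        rw [ShF_of0]
        simp [shmap, FreeGroup.map.of]
      rw [h1]
    · -- of 1
      have h1 : phi0h (FreeGroup.of 1) = FreeGroup.of 0 := by
        simp [phi0h, FreeGroup.lift_apply_of, phif]
      rw [h1, ShF_of0]
      have h2 : ShF (She γ) (FreeGroup.of 1) = FreeGroup.of 1 := by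
        rw [ShF_succ]
        show shmap (ShF γ (FreeGroup.of 0)) = FreeGroup.of 1
        rw [ShF_of0]; simp [shmap, FreeGroup.map.of]
      rw [h2, h1]
    · -- of (k+2)
      have h2 : phi0h (FreeGroup.of (k+2)) = FreeGroup.of (k+2) := by
        simp [phi0h, FreeGroup.lift_apply_of, phif]
      rw [h2]
      have h3 : ShF (She γ) (FreeGroup.of (k+2)) = shmap (shmap (γ (FreeGroup.of k))) := by
        rw [ShF_succ]
        show shmap (ShF γ (FreeGroup.of (k+1))) = _
        rw [ShF_succ]
      rw [h3, phi0_fix_sh2]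
  exact DFunLike.congr_fun this x

theorem braid_I2 : phi0e * She phi0e * phi0e = She phi0e * phi0e * She phi0e := by
  apply MulEquiv.ext
  intro x
  show phi0h (ShF phi0e (phi0h x)) = ShF phi0e (phi0h (ShF phi0e x))
  have : (phi0h.comp ((ShF phi0e).comp phi0h)) = ((ShF phi0e).comp (phi0h.comp (ShF phi0e))) := by
    apply FreeGroup.ext_hom
    intro k
    simp only [MonoidHom.comp_apply]
    have e0 : phi0h (FreeGroup.of 0) = FreeGroup.of 0 * FreeGroup.of 1 * (FreeGroup.of 0)⁻¹ := by
      simp [phi0h, FreeGroup.lift_apply_of, phif]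
    have e1 : phi0h (FreeGroup.of 1) = FreeGroup.of 0 := by
      simp [phi0h, FreeGroup.lift_apply_of, phif]
    have e2 : ∀ k, phi0h (FreeGroup.of (k+2)) = FreeGroup.of (k+2) := by
      intro k; simp [phi0h, FreeGroup.lift_apply_of, phif]
    have s0 : ShF phi0e (FreeGroup.of 0) = FreeGroup.of 0 := ShF_of0 _
    have s1 : ShF phi0e (FreeGroup.of 1) = FreeGroup.of 1 * FreeGroup.of 2 * (FreeGroup.of 1)⁻¹ := by
      rw [ShF_succ]
      show shmap (phi0h (FreeGroup.of 0)) = _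
      rw [e0]
      rw [_root_.map_mul, _root_.map_mul, _root_.map_inv]
      simp [shmap, FreeGroup.map.of]
    have s2 : ShF phi0e (FreeGroup.of 2) = FreeGroup.of 1 := by
      rw [ShF_succ]
      show shmap (phi0h (FreeGroup.of 1)) = _
      rw [e1]; simp [shmap, FreeGroup.map.of]
    have s3 : ∀ k, ShF phi0e (FreeGroup.of (k+3)) = FreeGroup.of (k+3) := by
      intro k
      rw [ShF_succ]
      show shmap (phi0h (FreeGroup.of (k+2))) = _
      rw [e2]; simp [shmap, FreeGroup.map.of]
    have e22 : phi0h (FreeGroup.of 2) = FreeGroup.of 2 := e2 0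
    rcases k with _ | _ | _ | k
    · simp only [e0, e1, e22, s0, s1, s2, _root_.map_mul, _root_.map_inv]
      group
    · simp only [e0, e1, e22, s0, s1, s2, _root_.map_mul, _root_.map_inv]
    · simp only [e0, e1, e22, s0, s1, s2, _root_.map_mul, _root_.map_inv]
    · have e2k : phi0h (FreeGroup.of (k+3)) = FreeGroup.of (k+3) := e2 (k+1)
      have s3k : ShF phi0e (FreeGroup.of (k+3)) = FreeGroup.of (k+3) := s3 k
      simp only [e2k, s3k]
  exact DFunLike.congr_fun this x

end LDProof
end M4
namespace LDProof
open FreeGroup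

variable {X : Type*}

/-! ## The magma invariant Φ -/

def Phi {X : Type*} : FreeMagma X → MulAut FG
  | FreeMagma.of _ => 1
  | FreeMagma.mul a b => Phi a * She (Phi b) * phi0e * (She (Phi a))⁻¹

@[simp] theorem Phi_mul (a b : FreeMagma X) :
    Phi (a * b) = Phi a * She (Phi b) * phi0e * (She (Phi a))⁻¹ := rfl

theorem Phi_ld (a b c : FreeMagma X) : Phi (a * (b * c)) = Phi ((a * b) * (a * c)) := by
  set A := Phi a with hA1
  set B := Phi b
  set C := Phi c
  show A * She (B * She C * phi0e * (She B)⁻¹) * phi0e * (She A)⁻¹ =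
      (A * She B * phi0e * (She A)⁻¹) * She (A * She C * phi0e * (She A)⁻¹) * phi0e *
        (She (A * She B * phi0e * (She A)⁻¹))⁻¹
  rw [She_mul, She_mul, She_mul, She_mul, She_mul, She_mul, She_mul, She_mul, She_mul]
  set sA := She A
  set sB := She B
  set sphi := She phi0e
  set ssA := She (She A)
  set ssB := She (She B)
  set ssC := She (She C)
  have hiA : She sA⁻¹ = ssA⁻¹ := (She_inv sA).symm
  have hiB : She sB⁻¹ = ssB⁻¹ := (She_inv sB).symm
  rw [hiA, hiB]
  have hC : phi0e * ssC = ssC * phi0e := comm_I1 C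
  have hAc : phi0e * ssA = ssA * phi0e := comm_I1 A
  have hBc : Commute phi0e ssB := comm_I1 B
  have hbraid : phi0e * sphi * phi0e = sphi * phi0e * sphi := braid_I2
  have hA' : ssA⁻¹ * (phi0e * ssA) = phi0e := by rw [hAc]; group
  have hB' : phi0e * ssB⁻¹ = ssB⁻¹ * phi0e := (hBc.inv_right).eq
  symm
  calc A * sB * phi0e * sA⁻¹ * (sA * ssC * sphi * ssA⁻¹) * phi0e * (sA * ssB * sphi * ssA⁻¹)⁻¹
      = A * sB * ((phi0e * ssC) * (sphi * (ssA⁻¹ * (phi0e * ssA)) * sphi⁻¹ * (ssB⁻¹ * sA⁻¹))) := by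
        group
    _ = A * sB * ((ssC * phi0e) * (sphi * phi0e * sphi⁻¹ * (ssB⁻¹ * sA⁻¹))) := by
        rw [hC, hA']
    _ = A * sB * ssC * ((phi0e * sphi * phi0e) * (sphi⁻¹ * (ssB⁻¹ * sA⁻¹))) := by group
    _ = A * sB * ssC * ((sphi * phi0e * sphi) * (sphi⁻¹ * (ssB⁻¹ * sA⁻¹))) := by rw [hbraid]
    _ = A * sB * ssC * sphi * ((phi0e * ssB⁻¹) * sA⁻¹) := by group
    _ = A * sB * ssC * sphi * ((ssB⁻¹ * phi0e) * sA⁻¹) := by rw [hB']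
    _ = A * (sB * ssC * sphi * ssB⁻¹) * phi0e * sA⁻¹ := by group

theorem Phi_LD {T T' : FreeMagma X} (h : LDEquiv T T') : Phi T = Phi T' := by
  induction h with
  | ld a b c => exact Phi_ld a b c
  | refl a => rfl
  | symm _ ih => exact ih.symm
  | trans _ _ ih1 ih2 => exact ih1.trans ih2
  | mul_left c _ ih => simp [ih]
  | mul_right c _ ih => simp [ih]

/-! ## σ₁-positive products are nontrivial -/

theorem sigma_pos_ne_one (l : List (MulAut FG × MulAut FG)) (hl : l ≠ []) :
    (l.map fun p => She p.1 * phi0e * She p.2).prod ≠ 1 := by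
  have key : ∀ l : List (MulAut FG × MulAut FG), l ≠ [] →
      Qset (((l.map fun p => She p.1 * phi0e * She p.2).prod) (FreeGroup.of 0)) := by
    intro l hl
    induction l with
    | nil => exact absurd rfl hl
    | cons p t ih =>
      rw [List.map_cons, List.prod_cons]
      have happ : ∀ (α β : MulAut FG) (x : FG), (α * β) x = α (β x) := fun _ _ _ => rfl
      rw [happ]
      cases t with
      | nil =>
        simp only [List.map_nil, List.prod_nil]
        rw [happ, happ]
        show Qset (She p.1 (phi0e (She p.2 (FreeGroup.of 0))))
        have h2 : She p.2 (FreeGroup.of 0) = FreeGroup.of 0 := ShF_of0 p.2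
        rw [h2]
        exact Q_She _ (Q_phi0_seed)
      | cons q t' =>
        have ih2 := ih (by simp)
        rw [happ, happ]
        exact Q_She _ (Q_phi0 (Q_She _ ih2))
  intro hc
  have := key l hl
  rw [hc] at this
  exact of0_not_Q this

/-! ## Irreflexivity -/

theorem Lt_chain {a b : FreeMagma X} (h : Lt a b) :
    ∃ ws : List (FreeMagma X), ws ≠ [] ∧ LDEquiv b (ws.foldl (· * ·) a) := by
  induction h with
  | single hstep =>
    obtain ⟨w, hw⟩ := hstep
    exact ⟨[w], by simp, hw⟩
  | tail _ hstep ih =>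
    obtain ⟨w, hw⟩ := hstep
    obtain ⟨ws, hne, hEq⟩ := ih
    refine ⟨ws ++ [w], by simp, ?_⟩
    rw [List.foldl_append, List.foldl_cons, List.foldl_nil]
    exact hw.trans (LDEquiv.mul_right w hEq)

theorem irreflexivity {a b : FreeMagma X} (hlt : Lt a b) (heq : LDEquiv a b) : False := by
  obtain ⟨ws, hne, hEq⟩ := Lt_chain hlt
  -- Phi b = Phi (foldl) and Phi a = Phi b
  have hPhi : Phi a = Phi (ws.foldl (· * ·) a) := (Phi_LD heq).trans (Phi_LD hEq)
  -- express Phi (foldl) = Phi a * prod-of-blocks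
  have key : ∀ (ws : List (FreeMagma X)) (z : FreeMagma X), ws ≠ [] →
      ∃ l : List (MulAut FG × MulAut FG), l ≠ [] ∧
        Phi (ws.foldl (· * ·) z) = Phi z * (l.map fun p => She p.1 * phi0e * She p.2).prod := by
    intro ws
    induction ws using List.reverseRecOn with
    | nil => intro z h; exact absurd rfl h
    | append_singleton t w ih =>
      intro z _
      rw [List.foldl_append, List.foldl_cons, List.foldl_nil]
      cases t with
      | nil =>
        simp only [List.foldl_nil]
        refine ⟨[(Phi w, (Phi z)⁻¹)], by simp, ?_⟩
        simp [Phi_mul, She_inv, mul_assoc]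
      | cons u t' =>
        obtain ⟨l, hlne, hl⟩ := ih z (by simp)
        refine ⟨l ++ [(Phi w, (Phi ((u :: t').foldl (· * ·) z))⁻¹)], by simp, ?_⟩
        rw [Phi_mul, hl, She_inv]
        rw [List.map_append, List.prod_append]
        simp [mul_assoc, hl]
  obtain ⟨l, hlne, hl⟩ := key ws a hne
  rw [hl] at hPhi
  have hone : (l.map fun p => She p.1 * phi0e * She p.2).prod = 1 :=
    (left_eq_mul.mp hPhi)
  exact sigma_pos_ne_one l hlne hone

end LDProof
namespace LDProof

variable {X : Type*}

/-- LDEquiv is preserved by relabelings. -/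
theorem _root_.LDEquiv.map {Y : Type*} (f : X → Y) {T T' : FreeMagma X} (h : LDEquiv T T') :
    LDEquiv (FreeMagma.map f T) (FreeMagma.map f T') := by
  induction h with
  | ld a b c =>
    rw [map_mul, map_mul, map_mul, map_mul, map_mul]
    exact LDEquiv.ld _ _ _
  | refl a => exact LDEquiv.refl _
  | symm _ ih => exact ih.symm
  | trans _ _ ih1 ih2 => exact ih1.trans ih2
  | mul_left c _ ih => rw [map_mul, map_mul]; exact LDEquiv.mul_left _ ih
  | mul_right c _ ih => rw [map_mul, map_mul]; exact LDEquiv.mul_right _ ih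

theorem Lt.map {Y : Type*} (f : X → Y) {a b : FreeMagma X} (h : Lt a b) :
    Lt (FreeMagma.map f a) (FreeMagma.map f b) := by
  induction h with
  | single hstep =>
    obtain ⟨w, hw⟩ := hstep
    refine Relation.TransGen.single ⟨FreeMagma.map f w, ?_⟩
    have := hw.map f
    rwa [map_mul] at this
  | tail _ hstep ih =>
    obtain ⟨w, hw⟩ := hstep
    refine Relation.TransGen.tail ih ⟨FreeMagma.map f w, ?_⟩
    have := hw.map f
    rwa [map_mul] at this

/-- rightmost variable -/
def rightmost {X : Type*} : FreeMagma X → X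
  | FreeMagma.of x => x
  | FreeMagma.mul _ b => rightmost b

@[simp] theorem rightmost_mul (a b : FreeMagma X) : rightmost (a * b) = rightmost b := rfl

theorem rightmost_LD {T T' : FreeMagma X} (h : LDEquiv T T') : rightmost T = rightmost T' := by
  induction h with
  | ld a b c => rfl
  | refl a => rfl
  | symm _ ih => exact ih.symm
  | trans _ _ ih1 ih2 => exact ih1.trans ih2
  | mul_left c _ ih => simpa using ih
  | mul_right c _ ih => rfl

/-- comparison + irreflexivity: left factors of equivalent products with equal projections
are equivalent. -/
theorem left_equiv {P Q P' Q' : FreeMagma X}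
    (h : LDEquiv (P * Q) (P' * Q'))
    (hpi : FreeMagma.map (fun _ : X => ()) P = FreeMagma.map (fun _ : X => ()) P') :
    LDEquiv P P' := by
  rcases comparison h with h1 | ⟨M, hlt, heq⟩ | ⟨M, hlt, heq⟩
  · exact h1
  · exfalso
    refine irreflexivity (hlt.map (fun _ : X => ())) ?_
    have := heq.map (fun _ : X => ())
    rw [← hpi] at this
    exact this.symm
  · exfalso
    refine irreflexivity (hlt.map (fun _ : X => ())) ?_
    have := heq.map (fun _ : X => ())
    rw [hpi] at this
    exact this.symm

/-- right-nested contexts -/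
def nest (L : List (FreeMagma X)) (W : FreeMagma X) : FreeMagma X := L.foldr (· * ·) W

@[simp] theorem nest_nil (W : FreeMagma X) : nest [] W = W := rfl
@[simp] theorem nest_cons (d : FreeMagma X) (L : List (FreeMagma X)) (W : FreeMagma X) :
    nest (d :: L) W = d * nest L W := rfl

theorem nest_distr (L : List (FreeMagma X)) (D A B : FreeMagma X) :
    LDEquiv (D * nest L (A * B)) ((D * nest L A) * (D * nest L B)) := by
  induction L generalizing D with
  | nil => exact LDEquiv.ld D A B
  | cons d L ih =>
    simp only [nest_cons]
    exact (LDEquiv.mul_left D (ih d)).trans (LDEquiv.ld D _ _)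

theorem map_nest {Y : Type*} (f : X → Y) (L : List (FreeMagma X)) (W : FreeMagma X) :
    FreeMagma.map f (nest L W) = nest (L.map (FreeMagma.map f)) (FreeMagma.map f W) := by
  induction L with
  | nil => rfl
  | cons d L ih => simp [map_mul, ih]

theorem rightmost_nest (L : List (FreeMagma X)) (W : FreeMagma X) :
    rightmost (nest L W) = rightmost W := by
  induction L with
  | nil => rfl
  | cons d L ih => simpa using ih

/-- the cancellation machine -/
theorem canCtx : ∀ (W W' D : FreeMagma X) (L : List (FreeMagma X)),
    FreeMagma.map (fun _ : X => ()) W = FreeMagma.map (fun _ : X => ()) W' →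
    LDEquiv (D * nest L W) (D * nest L W') → W = W' := by
  intro W
  induction W using FreeMagma.recOnMul with
  | ih1 x =>
    intro W' D L hpi heq
    cases W' using FreeMagma.recOnMul with
    | ih1 y =>
      have := rightmost_LD heq
      simp only [rightmost_mul, rightmost_nest] at this
      rw [show rightmost (FreeMagma.of x) = x from rfl,
        show rightmost (FreeMagma.of y) = y from rfl] at this
      rw [this]
    | ih2 a b _ _ =>
      exfalso
      rw [map_mul] at hpi
      simp at hpi
  | ih2 W1 W2 ih1 ih2 =>
    intro W' D L hpi heq
    cases W' using FreeMagma.recOnMul with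
    | ih1 y =>
      exfalso
      rw [map_mul] at hpi
      simp at hpi
    | ih2 W1' W2' _ _ =>
      rw [map_mul, map_mul] at hpi
      have hpi1 : FreeMagma.map (fun _ : X => ()) W1 = FreeMagma.map (fun _ : X => ()) W1' :=
        by injection hpi
      have hpi2 : FreeMagma.map (fun _ : X => ()) W2 = FreeMagma.map (fun _ : X => ()) W2' :=
        by injection hpi
      have hp : LDEquiv ((D * nest L W1) * (D * nest L W2)) ((D * nest L W1') * (D * nest L W2')) :=
        ((nest_distr L D W1 W2).symm.trans heq).trans (nest_distr L D W1' W2')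
      have hpieq : FreeMagma.map (fun _ : X => ()) (D * nest L W1) =
          FreeMagma.map (fun _ : X => ()) (D * nest L W1') := by
        rw [map_mul, map_mul, map_nest, map_nest, hpi1]
      have hW1 : W1 = W1' := by
        refine ih1 W1' D L hpi1 ?_
        exact left_equiv hp hpieq
      subst hW1
      have hW2 : W2 = W2' := by
        refine ih2 W2' (D * nest L W1) (D :: L) hpi2 ?_
        simpa using hp
      rw [hW2]

/-- THE MAIN LEMMA -/
theorem main_eq : ∀ (T T' : FreeMagma X), LDEquiv T T' →
    FreeMagma.map (fun _ : X => ()) T = FreeMagma.map (fun _ : X => ()) T' → T = T' := by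
  intro T
  induction T using FreeMagma.recOnMul with
  | ih1 x =>
    intro T' heq hpi
    cases T' using FreeMagma.recOnMul with
    | ih1 y =>
      have := rightmost_LD heq
      rw [show rightmost (FreeMagma.of x) = x from rfl,
        show rightmost (FreeMagma.of y) = y from rfl] at this
      rw [this]
    | ih2 a b _ _ =>
      exfalso
      rw [map_mul] at hpi
      simp at hpi
  | ih2 A B ihA ihB =>
    intro T' heq hpi
    cases T' using FreeMagma.recOnMul with
    | ih1 y =>
      exfalso
      rw [map_mul] at hpi
      simp at hpi
    | ih2 A' B' _ _ =>
      rw [map_mul, map_mul] at hpi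
      have hpi1 : FreeMagma.map (fun _ : X => ()) A = FreeMagma.map (fun _ : X => ()) A' :=
        by injection hpi
      have hpi2 : FreeMagma.map (fun _ : X => ()) B = FreeMagma.map (fun _ : X => ()) B' :=
        by injection hpi
      have hA : A = A' := ihA A' (left_equiv heq hpi1) hpi1
      subst hA
      have hB : B = B' := canCtx B B' A [] hpi2 (by simpa using heq)
      rw [hB]

end LDProof


/-- if `π : FreeMagma X → FreeMagma Unit` is the magma morphism
sending every variable to the single generator, then two terms with the same
image under `π` are LD-equivalent iff they are equal. -/
theorem ldEquiv_iff_eq_of_same_projection {X : Type*} (T T' : FreeMagma X)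
    (h : FreeMagma.map (fun _ : X => ()) T = FreeMagma.map (fun _ : X => ()) T') :
    LDEquiv T T' ↔ T = T' := by
  constructor
  · intro heq
    exact LDProof.main_eq T T' heq h
  · rintro rfl
    exact LDEquiv.refl T
end

section
/- The half-conjugacy rack of a free group is the free rack: let X be a set, F(X) the free group on X, and equip X × F(X) with the half-conjugacy rack operation (y, b) ◃ (x, a) := (x, a·b⁻¹·y·b). Then for every rack R and every function f : X → R, there exists a unique shelf homomorphism φ : X × F(X) → R (i.e., φ(u ◃ v) = φ(u) ◃ φ(v) for all u, v) such that φ(x, 1) = f(x) for every x ∈ X. -/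
open Quandles


/-- The half-conjugacy rack operation on `X × FreeGroup X`:
`(y, b) ◃ (x, a) := (x, a * b⁻¹ * y * b)`. -/
def freeHalfConjAct {X : Type*} (p q : X × FreeGroup X) : X × FreeGroup X :=
  (q.1, q.2 * p.2⁻¹ * FreeGroup.of p.1 * p.2)

/-- the half-conjugacy rack of a free group is the free rack: for
every rack `R` and every function `f : X → R`, there is a unique shelf
homomorphism `φ : X × FreeGroup X → R` with `φ (x, 1) = f x` for every `x`. -/
theorem halfConj_freeGroup_is_free_rack {X : Type*} (R : Type*) [Rack R] (f : X → R) :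
    ∃! φ : X × FreeGroup X → R,
      (∀ u v : X × FreeGroup X, φ (freeHalfConjAct u v) = Shelf.act (φ u) (φ v)) ∧
      ∀ x : X, φ (x, 1) = f x := by
  classical
  set ρ : FreeGroup X →* Equiv.Perm R :=
    FreeGroup.lift (fun x => (Rack.act' (f x))⁻¹) with hρ
  have hρof : ∀ x : X, ρ (FreeGroup.of x) = (Rack.act' (f x))⁻¹ := by
    intro x; simp [hρ]
  have hρp : ∀ x : X, ρ (pure x) = (Rack.act' (f x))⁻¹ := hρof
  -- Key conjugation lemma
  have K : ∀ g : FreeGroup X, ∀ s : R,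
      Rack.act' (ρ g s) = ρ g * Rack.act' s * (ρ g)⁻¹ := by
    intro g
    induction g with
    | C1 => simp
    | of x =>
      intro s
      have h := Rack.ad_conj (f x) ((Rack.act' (f x))⁻¹ s)
      have h2 : f x ◃ ((Rack.act' (f x))⁻¹ s) = s := by
        simp [Rack.act'_apply]
      rw [h2] at h
      rw [hρof, h]
      group
    | inv_of x ih =>
      intro s
      have h := Rack.ad_conj (f x) s
      rw [map_inv, hρof, inv_inv]
      simpa [Rack.act'_apply] using h
    | mul a b iha ihb =>
      intro s
      rw [map_mul]
      have : (ρ a * ρ b) s = ρ a (ρ b s) := rfl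
      rw [this, iha, ihb]
      group
  refine ⟨fun p => (ρ p.2)⁻¹ (f p.1), ⟨?_, ?_⟩, ?_⟩
  · intro u v
    show (ρ (v.2 * u.2⁻¹ * FreeGroup.of u.1 * u.2))⁻¹ (f v.1) =
      ((ρ u.2)⁻¹ (f u.1)) ◃ ((ρ v.2)⁻¹ (f v.1))
    have hK := K u.2⁻¹ (f u.1)
    rw [map_inv] at hK
    rw [← Rack.act'_apply, hK]
    simp only [map_mul, map_inv, hρof, mul_inv_rev, inv_inv]
    have : ∀ σ τ : Equiv.Perm R, ∀ r : R, (σ * τ) r = σ (τ r) := fun _ _ _ => rfl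
    simp only [this]
  · intro x
    simp
  · intro ψ ⟨hact, hone⟩
    -- key: ψ (x, a * b) = (ρ b)⁻¹ (ψ (x, a))
    have L : ∀ b : FreeGroup X, ∀ x : X, ∀ a : FreeGroup X,
        ψ (x, a * b) = (ρ b)⁻¹ (ψ (x, a)) := by
      intro b
      induction b with
      | C1 => intro x a; simp
      | of y =>
        intro x a
        have h := hact (y, 1) (x, a)
        simp only [freeHalfConjAct, inv_one, mul_one, one_mul] at h
        rw [h, hone, hρof,
          inv_inv, Rack.act'_apply]
      | inv_of y ih =>
        intro x a
        have h := ih x (a * (FreeGroup.of y)⁻¹)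
        rw [inv_mul_cancel_right] at h
        rw [map_inv, inv_inv]
        rw [h]
        simp
      | mul c d ihc ihd =>
        intro x a
        rw [← mul_assoc, ihd, ihc, map_mul, mul_inv_rev]
        rfl
    funext p
    obtain ⟨x, a⟩ := p
    have := L a x 1
    rw [one_mul, hone] at this
    exact this
end
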